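/- Let (ξ(k))_{k∈ℤ} be i.i.d. Bernoulli(1/2) random variables. Then for every integer n ≥ 1, every l ∈ ℤ and every ε ∈ {−1, +1} with (l, ε) ≠ (−n, +1), the probability that ξ(−n + j) = ξ(l + ε·j) holds for all j ∈ {0, 1, ..., 2n} is at most 2^{−n}. Consequently, the probability that the word ξ(−n), ξ(−n+1), ..., ξ(n) occurs (read forwards or backwards) at some other position within [−n^{10}, n^{10}] is at most 4·n^{10}·2^{−n}. -/

import Mathlib

open MeasureTheory ProbabilityTheory

set_option linter.unusedSectionVars false


lemma half_pow_bool {Ω : Type*} [MeasurableSpace Ω] (P : Measure Ω) [IsProbabilityMeasure P]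
    (ξ : Ω → ℤ → Bool) (hξmeas : ∀ k : ℤ, Measurable fun ω => ξ ω k)
    (hξbern : ∀ k : ℤ, P {ω | ξ ω k = true} = 1 / 2) (k : ℤ) (v : Bool) :
    P {ω | ξ ω k = v} = 1 / 2 := by
  cases v
  · have hc : {ω | ξ ω k = false} = {ω | ξ ω k = true}ᶜ := by
      ext ω; simp [Set.mem_compl_iff]
    have hs : MeasurableSet {ω | ξ ω k = true} := (hξmeas k) (measurableSet_singleton true)
    rw [hc, prob_compl_eq_one_sub hs, hξbern k,
      one_div, ENNReal.one_sub_inv_two]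
  · exact hξbern k

lemma pair_prob_le {Ω : Type*} [MeasurableSpace Ω] (P : Measure Ω) [IsProbabilityMeasure P]
    (ξ : Ω → ℤ → Bool)
    (hξmeas : ∀ k : ℤ, Measurable fun ω => ξ ω k)
    (hξindep : iIndepFun (fun k ω => ξ ω k) P)
    (hξbern : ∀ k : ℤ, P {ω | ξ ω k = true} = 1 / 2) :
    ∀ (m : ℕ) (a b : Fin m → ℤ), Function.Injective (Sum.elim a b) →
      P {ω | ∀ i, ξ ω (a i) = ξ ω (b i)} ≤ (1 / 2 : ENNReal) ^ m := by
  intro m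
  induction m with
  | zero =>
      intro a b _
      calc P {ω | ∀ i, ξ ω (a i) = ξ ω (b i)} ≤ P Set.univ := measure_mono (Set.subset_univ _)
        _ = 1 := measure_univ
        _ = (1/2 : ENNReal) ^ 0 := by norm_num
  | succ m ih =>
      intro a b hinj
      have hinj' : Function.Injective
          (Sum.elim (fun i : Fin m => a i.castSucc) (fun i : Fin m => b i.castSucc)) := by
        intro p q h
        rcases p with i | i <;> rcases q with j | j <;>
          simp only [Sum.elim_inl, Sum.elim_inr] at h
        · have := hinj (show Sum.elim a b (Sum.inl i.castSucc) =
            Sum.elim a b (Sum.inl j.castSucc) from h)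
          simpa [Fin.castSucc_inj] using this
        · have := hinj (show Sum.elim a b (Sum.inl i.castSucc) =
            Sum.elim a b (Sum.inr j.castSucc) from h)
          simp at this
        · have := hinj (show Sum.elim a b (Sum.inr i.castSucc) =
            Sum.elim a b (Sum.inl j.castSucc) from h)
          simp at this
        · have := hinj (show Sum.elim a b (Sum.inr i.castSucc) =
            Sum.elim a b (Sum.inr j.castSucc) from h)
          simpa [Fin.castSucc_inj] using this
      -- index sets
      have hal : a (Fin.last m) ∈
          Finset.image a Finset.univ ∪ Finset.image (fun i : Fin m => b i.castSucc) Finset.univ := by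
        simp only [Finset.mem_union, Finset.mem_image]
        exact Or.inl ⟨Fin.last m, Finset.mem_univ _, rfl⟩
      have hai : ∀ i : Fin m, a i.castSucc ∈
          Finset.image a Finset.univ ∪ Finset.image (fun i : Fin m => b i.castSucc) Finset.univ := fun i => by
        simp only [Finset.mem_union, Finset.mem_image]
        exact Or.inl ⟨i.castSucc, Finset.mem_univ _, rfl⟩
      have hbi : ∀ i : Fin m, b i.castSucc ∈
          Finset.image a Finset.univ ∪ Finset.image (fun i : Fin m => b i.castSucc) Finset.univ := fun i => by
        simp only [Finset.mem_union, Finset.mem_image]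
        exact Or.inr ⟨i, Finset.mem_univ _, rfl⟩
      have hblT : b (Fin.last m) ∉
          Finset.image a Finset.univ ∪ Finset.image (fun i : Fin m => b i.castSucc) Finset.univ := by
        simp only [Finset.mem_union, Finset.mem_image, not_or, not_exists]
        constructor
        · rintro i ⟨-, hi⟩
          have := hinj (show Sum.elim a b (Sum.inl i) =
            Sum.elim a b (Sum.inr (Fin.last m)) from hi)
          simp at this
        · rintro i ⟨-, hi⟩
          have := hinj (show Sum.elim a b (Sum.inr i.castSucc) =
            Sum.elim a b (Sum.inr (Fin.last m)) from hi)
          have h2 : i.castSucc = Fin.last m := by simpa using this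
          exact absurd h2 (Fin.castSucc_lt_last i).ne
      have hdisj : Disjoint ({b (Fin.last m)} : Finset ℤ)
          (Finset.image a Finset.univ ∪ Finset.image (fun i : Fin m => b i.castSucc) Finset.univ) :=
        Finset.disjoint_singleton_left.mpr hblT
      have hIndep := iIndepFun.indepFun_finset _ _ hdisj hξindep (fun k => hξmeas k)
      have hblS : b (Fin.last m) ∈ ({b (Fin.last m)} : Finset ℤ) := Finset.mem_singleton_self _
      -- key product identity
      have key : ∀ v : Bool,
          P ({ω | (∀ i : Fin m, ξ ω (a i.castSucc) = ξ ω (b i.castSucc)) ∧ ξ ω (a (Fin.last m)) = v}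
              ∩ {ω | ξ ω (b (Fin.last m)) = v}) =
            P {ω | (∀ i : Fin m, ξ ω (a i.castSucc) = ξ ω (b i.castSucc)) ∧ ξ ω (a (Fin.last m)) = v}
              * P {ω | ξ ω (b (Fin.last m)) = v} := by
        intro v
        have hSx : MeasurableSet {x : (({b (Fin.last m)} : Finset ℤ) : Type) → Bool |
            x ⟨b (Fin.last m), hblS⟩ = v} :=
          measurableSet_eq_fun (measurable_pi_apply _) measurable_const
        have hSy : MeasurableSet {x : ((Finset.image a Finset.univ ∪
              Finset.image (fun i : Fin m => b i.castSucc) Finset.univ : Finset ℤ) : Type) → Bool |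
            (∀ i : Fin m, x ⟨a i.castSucc, hai i⟩ = x ⟨b i.castSucc, hbi i⟩)
              ∧ x ⟨a (Fin.last m), hal⟩ = v} := by
          rw [Set.setOf_and]
          apply MeasurableSet.inter
          · rw [Set.setOf_forall]
            exact MeasurableSet.iInter fun i =>
              measurableSet_eq_fun (measurable_pi_apply _) (measurable_pi_apply _)
          · exact measurableSet_eq_fun (measurable_pi_apply _) measurable_const
        have h := hIndep.measure_inter_preimage_eq_mul _ _ hSx hSy
        rw [Set.inter_comm, mul_comm]
        exact h
      have hmeasG : MeasurableSet {ω | ξ ω (a (Fin.last m)) = true} :=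
        (hξmeas _) (measurableSet_singleton true)
      have hsplit : {ω | ∀ i : Fin (m+1), ξ ω (a i) = ξ ω (b i)} ⊆
          ({ω | (∀ i : Fin m, ξ ω (a i.castSucc) = ξ ω (b i.castSucc)) ∧ ξ ω (a (Fin.last m)) = true}
            ∩ {ω | ξ ω (b (Fin.last m)) = true}) ∪
          ({ω | (∀ i : Fin m, ξ ω (a i.castSucc) = ξ ω (b i.castSucc)) ∧ ξ ω (a (Fin.last m)) = false}
            ∩ {ω | ξ ω (b (Fin.last m)) = false}) := by
        intro ω h
        simp only [Set.mem_setOf_eq] at h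
        simp only [Set.mem_union, Set.mem_inter_iff, Set.mem_setOf_eq]
        cases hv : ξ ω (a (Fin.last m)) with
        | false =>
            exact Or.inr ⟨⟨fun i => h _, rfl⟩, by rw [← h (Fin.last m)]; exact hv⟩
        | true =>
            exact Or.inl ⟨⟨fun i => h _, rfl⟩, by rw [← h (Fin.last m)]; exact hv⟩
      have hPF : P {ω | (∀ i : Fin m, ξ ω (a i.castSucc) = ξ ω (b i.castSucc))
            ∧ ξ ω (a (Fin.last m)) = true}
          + P {ω | (∀ i : Fin m, ξ ω (a i.castSucc) = ξ ω (b i.castSucc))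
            ∧ ξ ω (a (Fin.last m)) = false}
          = P {ω | ∀ i : Fin m, ξ ω (a i.castSucc) = ξ ω (b i.castSucc)} := by
        have h1 : {ω | (∀ i : Fin m, ξ ω (a i.castSucc) = ξ ω (b i.castSucc))
              ∧ ξ ω (a (Fin.last m)) = true}
            = {ω | ∀ i : Fin m, ξ ω (a i.castSucc) = ξ ω (b i.castSucc)}
              ∩ {ω | ξ ω (a (Fin.last m)) = true} := by
          ext ω; simp [Set.mem_inter_iff]
        have h2 : {ω | (∀ i : Fin m, ξ ω (a i.castSucc) = ξ ω (b i.castSucc))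
              ∧ ξ ω (a (Fin.last m)) = false}
            = {ω | ∀ i : Fin m, ξ ω (a i.castSucc) = ξ ω (b i.castSucc)}
              \ {ω | ξ ω (a (Fin.last m)) = true} := by
          ext ω; simp [Set.mem_diff]
        rw [h1, h2, measure_inter_add_diff _ hmeasG]
      calc P {ω | ∀ i : Fin (m+1), ξ ω (a i) = ξ ω (b i)}
          ≤ P ({ω | (∀ i : Fin m, ξ ω (a i.castSucc) = ξ ω (b i.castSucc))
                ∧ ξ ω (a (Fin.last m)) = true} ∩ {ω | ξ ω (b (Fin.last m)) = true})
            + P ({ω | (∀ i : Fin m, ξ ω (a i.castSucc) = ξ ω (b i.castSucc))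
                ∧ ξ ω (a (Fin.last m)) = false} ∩ {ω | ξ ω (b (Fin.last m)) = false}) :=
            (measure_mono hsplit).trans (measure_union_le _ _)
        _ = P {ω | (∀ i : Fin m, ξ ω (a i.castSucc) = ξ ω (b i.castSucc))
                ∧ ξ ω (a (Fin.last m)) = true} * (1/2)
            + P {ω | (∀ i : Fin m, ξ ω (a i.castSucc) = ξ ω (b i.castSucc))
                ∧ ξ ω (a (Fin.last m)) = false} * (1/2) := by
            rw [key true, key false, half_pow_bool P ξ hξmeas hξbern _ true,
              half_pow_bool P ξ hξmeas hξbern _ false]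
        _ = (P {ω | (∀ i : Fin m, ξ ω (a i.castSucc) = ξ ω (b i.castSucc))
                ∧ ξ ω (a (Fin.last m)) = true}
            + P {ω | (∀ i : Fin m, ξ ω (a i.castSucc) = ξ ω (b i.castSucc))
                ∧ ξ ω (a (Fin.last m)) = false}) * (1/2) := (add_mul _ _ _).symm
        _ = P {ω | ∀ i : Fin m, ξ ω (a i.castSucc) = ξ ω (b i.castSucc)} * (1/2) := by
            rw [hPF]
        _ ≤ (1/2 : ENNReal)^m * (1/2) := mul_le_mul_left (ih _ _ hinj') _
        _ = (1/2 : ENNReal)^(m+1) := (pow_succ _ m).symm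


lemma exists_inj_of_card (K : Finset ℕ) (m : ℕ) (h : m ≤ K.card) :
    ∃ j : Fin m → ℕ, Function.Injective j ∧ ∀ i, j i ∈ K := by
  obtain ⟨K', hsub, hcard⟩ := Finset.exists_subset_card_eq h
  refine ⟨fun i => (K'.orderIsoOfFin hcard i : ℕ), ?_, fun i => hsub (K'.orderIsoOfFin hcard i).2⟩
  intro i j hij
  exact (K'.orderIsoOfFin hcard).injective (Subtype.ext hij)

lemma comb_forward (n : ℕ) (l : ℤ) (hl : l ≠ -(n : ℤ)) :
    ∃ j : Fin (n + 1) → ℕ, (∀ i, j i ≤ 2 * n) ∧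
      Function.Injective (Sum.elim (fun i => -(n : ℤ) + j i) (fun i => l + j i)) := by
  set d : ℕ := (l + n).natAbs with hd
  have hd0 : 0 < d := by
    have : l + n ≠ 0 := by omega
    simpa [hd] using Int.natAbs_pos.mpr this
  set K : Finset ℕ := (Finset.range (2 * n + 1)).filter (fun j => j / d % 2 = 0) with hK
  -- card bound
  have hcardK : n + 1 ≤ K.card := by
    have hpart := Finset.card_filter_add_card_filter_not
      (s := Finset.range (2 * n + 1)) (p := fun j => j / d % 2 = 0)
    have hinj : ((Finset.range (2 * n + 1)).filter (fun j => ¬ j / d % 2 = 0)).card ≤ K.card := by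
      apply Finset.card_le_card_of_injOn (fun j : ℕ => j - d)
      · intro j hj
        simp only [Finset.mem_coe, Finset.mem_filter, Finset.mem_range] at hj
        have hdj : d ≤ j := by
          by_contra hc
          push_neg at hc
          have : j / d = 0 := Nat.div_eq_of_lt hc
          omega
        obtain ⟨x, rfl⟩ : ∃ x, j = x + d := ⟨j - d, by omega⟩
        have hdiv : (x + d) / d = x / d + 1 := Nat.add_div_right _ hd0
        show x + d - d ∈ K
        rw [Nat.add_sub_cancel]
        simp only [hK, Finset.mem_filter, Finset.mem_range]
        omega
      · intro j hj j' hj' he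
        simp only [Finset.mem_coe, Finset.mem_filter, Finset.mem_range] at hj hj'
        have he' : j - d = j' - d := he
        have hdj : d ≤ j := by
          by_contra hc; push_neg at hc
          have : j / d = 0 := Nat.div_eq_of_lt hc
          omega
        have hdj' : d ≤ j' := by
          by_contra hc; push_neg at hc
          have : j' / d = 0 := Nat.div_eq_of_lt hc
          omega
        omega
    have hcard : K.card + ((Finset.range (2 * n + 1)).filter (fun j => ¬ j / d % 2 = 0)).card
        = 2 * n + 1 := by
      rw [hK]; rw [hpart, Finset.card_range]
    omega
  -- cross property
  have hcross : ∀ j ∈ K, ∀ j' ∈ K, -(n : ℤ) + j ≠ l + j' := by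
    intro j hj j' hj' he
    simp only [hK, Finset.mem_filter, Finset.mem_range] at hj hj'
    have hsum : (j : ℤ) - j' = l + n := by omega
    rcases Int.natAbs_eq (l + n) with h1 | h1
    · have : (j : ℤ) = j' + d := by omega
      have hjj : j = j' + d := by exact_mod_cast this
      have : j / d = j' / d + 1 := by rw [hjj, Nat.add_div_right _ hd0]
      omega
    · have : (j' : ℤ) = j + d := by omega
      have hjj : j' = j + d := by exact_mod_cast this
      have : j' / d = j / d + 1 := by rw [hjj, Nat.add_div_right _ hd0]
      omega
  obtain ⟨j, hjinj, hjK⟩ := exists_inj_of_card K (n + 1) hcardK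
  refine ⟨j, ?_, ?_⟩
  · intro i
    have := hjK i
    simp only [hK, Finset.mem_filter, Finset.mem_range] at this
    omega
  · intro p q h
    rcases p with i | i <;> rcases q with i' | i' <;>
      simp only [Sum.elim_inl, Sum.elim_inr] at h
    · have : j i = j i' := by omega
      exact congrArg Sum.inl (hjinj this)
    · exact absurd h (hcross _ (hjK i) _ (hjK i'))
    · exact absurd h.symm (hcross _ (hjK i') _ (hjK i))
    · have : j i = j i' := by omega
      exact congrArg Sum.inr (hjinj this)

lemma comb_backward (n : ℕ) (l : ℤ) :
    ∃ j : Fin n → ℕ, (∀ i, j i ≤ 2 * n) ∧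
      Function.Injective (Sum.elim (fun i => -(n : ℤ) + j i) (fun i => l - j i)) := by
  set t : ℤ := l + n with ht
  set K : Finset ℕ := (Finset.range (2 * n + 1)).filter
    (fun j => 2 * (j : ℤ) < t ∨ (t < 2 * (j : ℤ) ∧ ¬((0 : ℤ) ≤ t - j ∧ t - (j : ℤ) ≤ 2 * n))) with hK
  set C : Finset ℕ := (Finset.range (2 * n + 1)).filter
    (fun j => t < 2 * (j : ℤ) ∧ (0 : ℤ) ≤ t - j ∧ t - (j : ℤ) ≤ 2 * n) with hC
  set D : Finset ℕ := (Finset.range (2 * n + 1)).filter (fun j => 2 * (j : ℤ) = t) with hD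
  have hCK : C.card ≤ K.card := by
    apply Finset.card_le_card_of_injOn (fun j : ℕ => (t - (j:ℤ)).toNat)
    · intro j hj
      simp only [hC, Finset.mem_coe, Finset.mem_filter, Finset.mem_range] at hj
      simp only [hK, Finset.mem_coe, Finset.mem_filter, Finset.mem_range]
      constructor
      · omega
      · left
        omega
    · intro j hj j' hj' he
      simp only [Finset.mem_coe, hC, Finset.mem_filter, Finset.mem_range] at hj hj'
      have he' : (t - (j:ℤ)).toNat = (t - (j':ℤ)).toNat := he
      omega
  have hD1 : D.card ≤ 1 := by
    apply Finset.card_le_one.mpr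
    intro j hj j' hj'
    simp only [hD, Finset.mem_filter, Finset.mem_range] at hj hj'
    omega
  have hcover : Finset.range (2 * n + 1) \ K ⊆ C ∪ D := by
    intro j hj
    simp only [Finset.mem_sdiff, hK, Finset.mem_filter, Finset.mem_range] at hj
    simp only [Finset.mem_union, hC, hD, Finset.mem_filter, Finset.mem_range]
    omega
  have hcardK : n ≤ K.card := by
    have h1 : K ⊆ Finset.range (2 * n + 1) := Finset.filter_subset _ _
    have h2 : (Finset.range (2 * n + 1) \ K).card = 2 * n + 1 - K.card := by
      rw [Finset.card_sdiff_of_subset h1, Finset.card_range]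
    have h3 : (Finset.range (2 * n + 1) \ K).card ≤ C.card + D.card :=
      le_trans (Finset.card_le_card hcover) (Finset.card_union_le _ _)
    have h4 : K.card ≤ 2 * n + 1 := by
      calc K.card ≤ (Finset.range (2*n+1)).card := Finset.card_le_card h1
        _ = 2*n+1 := Finset.card_range _
    omega
  have hcross : ∀ j ∈ K, ∀ j' ∈ K, -(n : ℤ) + j ≠ l - j' := by
    intro j hj j' hj' he
    simp only [hK, Finset.mem_filter, Finset.mem_range] at hj hj'
    omega
  obtain ⟨j, hjinj, hjK⟩ := exists_inj_of_card K n hcardK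
  refine ⟨j, ?_, ?_⟩
  · intro i
    have := hjK i
    simp only [hK, Finset.mem_filter, Finset.mem_range] at this
    omega
  · intro p q h
    rcases p with i | i <;> rcases q with i' | i' <;>
      simp only [Sum.elim_inl, Sum.elim_inr] at h
    · have : j i = j i' := by omega
      exact congrArg Sum.inl (hjinj this)
    · exact absurd h (hcross _ (hjK i) _ (hjK i'))
    · exact absurd h.symm (hcross _ (hjK i') _ (hjK i))
    · have : j i = j i' := by omega
      exact congrArg Sum.inr (hjinj this)

section mainsec
variable {Ω : Type*} [MeasurableSpace Ω] (P : Measure Ω) [IsProbabilityMeasure P]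
    (ξ : Ω → ℤ → Bool)
    (hξmeas : ∀ k : ℤ, Measurable fun ω => ξ ω k)
    (hξindep : iIndepFun (fun k ω => ξ ω k) P)
    (hξbern : ∀ k : ℤ, P {ω | ξ ω k = true} = 1 / 2)
include hξmeas hξindep hξbern


lemma fwd_bound (n : ℕ) (l : ℤ) (hl : l ≠ -(n : ℤ)) :
    P {ω | ∀ j : ℕ, j ≤ 2 * n → ξ ω (-(n : ℤ) + j) = ξ ω (l + j)} ≤
      (1 / 2 : ENNReal) ^ (n + 1) := by
  obtain ⟨j, hj2n, hinj⟩ := comb_forward n l hl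
  refine le_trans (measure_mono ?_) (pair_prob_le P ξ hξmeas hξindep hξbern (n + 1) _ _ hinj)
  intro ω h i
  exact h (j i) (hj2n i)

lemma bwd_bound (n : ℕ) (l : ℤ) :
    P {ω | ∀ j : ℕ, j ≤ 2 * n → ξ ω (-(n : ℤ) + j) = ξ ω (l - j)} ≤
      (1 / 2 : ENNReal) ^ n := by
  obtain ⟨j, hj2n, hinj⟩ := comb_backward n l
  refine le_trans (measure_mono ?_) (pair_prob_le P ξ hξmeas hξindep hξbern n _ _ hinj)
  intro ω h i
  exact h (j i) (hj2n i)

end mainsec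

/-- For an i.i.d. Bernoulli(1/2) scenery `ξ`, the probability that the word
`ξ(-n), ..., ξ(n)` occurs (read forwards or backwards) at a given other position is at
most `2^{-n}`, and the probability that it occurs at some other position within
`[-n^10, n^10]` is at most `4 n^10 2^{-n}`. -/
theorem word_unique_occurrence_bound
    {Ω : Type*} [MeasurableSpace Ω] (P : Measure Ω) [IsProbabilityMeasure P]
    (ξ : Ω → ℤ → Bool)
    (hξmeas : ∀ k : ℤ, Measurable fun ω => ξ ω k)
    (hξindep : iIndepFun (fun k ω => ξ ω k) P)
    (hξbern : ∀ k : ℤ, P {ω | ξ ω k = true} = 1 / 2)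
    (n : ℕ) (hn : 1 ≤ n) :
    (∀ l ε : ℤ, (ε = 1 ∨ ε = -1) → ¬(l = -(n : ℤ) ∧ ε = 1) →
      P {ω | ∀ j : ℕ, j ≤ 2 * n → ξ ω (-(n : ℤ) + j) = ξ ω (l + ε * j)} ≤
        (1 / 2 : ENNReal) ^ n) ∧
    P {ω | ∃ l ε : ℤ, (ε = 1 ∨ ε = -1) ∧ |l| ≤ (n : ℤ) ^ 10 ∧ ¬(l = -(n : ℤ) ∧ ε = 1) ∧
        ∀ j : ℕ, j ≤ 2 * n → ξ ω (-(n : ℤ) + j) = ξ ω (l + ε * j)} ≤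
      4 * (n : ENNReal) ^ 10 * (1 / 2 : ENNReal) ^ n := by
  have hfwdset : ∀ l : ℤ,
      {ω | ∀ j : ℕ, j ≤ 2 * n → ξ ω (-(n : ℤ) + j) = ξ ω (l + 1 * j)} =
      {ω | ∀ j : ℕ, j ≤ 2 * n → ξ ω (-(n : ℤ) + j) = ξ ω (l + j)} := by
    intro l; ext ω; simp [one_mul]
  have hbwdset : ∀ l : ℤ,
      {ω | ∀ j : ℕ, j ≤ 2 * n → ξ ω (-(n : ℤ) + j) = ξ ω (l + (-1) * j)} =
      {ω | ∀ j : ℕ, j ≤ 2 * n → ξ ω (-(n : ℤ) + j) = ξ ω (l - j)} := by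
    intro l; ext ω
    simp only [Set.mem_setOf_eq, neg_one_mul, ← sub_eq_add_neg]
  have hhalf : (1 / 2 : ENNReal) ^ (n + 1) ≤ (1 / 2 : ENNReal) ^ n :=
    pow_le_pow_of_le_one zero_le (by norm_num) (Nat.le_succ n)
  constructor
  · intro l ε hε hne
    rcases hε with rfl | rfl
    · have hl : l ≠ -(n : ℤ) := fun h => hne ⟨h, rfl⟩
      rw [hfwdset l]
      exact le_trans (fwd_bound P ξ hξmeas hξindep hξbern n l hl) hhalf
    · rw [hbwdset l]
      exact bwd_bound P ξ hξmeas hξindep hξbern n l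
  · set M : ℕ := n ^ 10 with hM
    have hNM : ((M : ℤ)) = (n : ℤ) ^ 10 := by push_cast [hM]; ring
    set I2 : Finset ℤ := Finset.Icc (-(M : ℤ)) (M : ℤ) with hI2
    set I1 : Finset ℤ := I2.erase (-(n : ℤ)) with hI1
    have hnM : (n : ℤ) ≤ (M : ℤ) := by
      have : n ≤ M := Nat.le_self_pow (by norm_num) n
      exact_mod_cast this
    have hmemn : -(n : ℤ) ∈ I2 := by
      simp only [hI2, Finset.mem_Icc]
      omega
    have hI2card : I2.card = 2 * M + 1 := by
      rw [hI2, Int.card_Icc]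
      omega
    have hI1card : I1.card = 2 * M := by
      rw [hI1, Finset.card_erase_of_mem hmemn, hI2card]
      omega
    -- union bound
    have hsub : {ω | ∃ l ε : ℤ, (ε = 1 ∨ ε = -1) ∧ |l| ≤ (n : ℤ) ^ 10 ∧ ¬(l = -(n : ℤ) ∧ ε = 1) ∧
          ∀ j : ℕ, j ≤ 2 * n → ξ ω (-(n : ℤ) + j) = ξ ω (l + ε * j)} ⊆
        (⋃ l ∈ I1, {ω | ∀ j : ℕ, j ≤ 2 * n → ξ ω (-(n : ℤ) + j) = ξ ω (l + j)}) ∪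
        (⋃ l ∈ I2, {ω | ∀ j : ℕ, j ≤ 2 * n → ξ ω (-(n : ℤ) + j) = ξ ω (l - j)}) := by
      rintro ω ⟨l, ε, hε, habs, hne, h⟩
      have hlI2 : l ∈ I2 := by
        simp only [hI2, Finset.mem_Icc]
        have := abs_le.mp habs
        omega
      rcases hε with rfl | rfl
      · left
        have hl : l ≠ -(n : ℤ) := fun hh => hne ⟨hh, rfl⟩
        refine Set.mem_biUnion (Finset.mem_erase.mpr ⟨hl, hlI2⟩) ?_
        intro j hj
        simpa using h j hj
      · right
        refine Set.mem_biUnion hlI2 ?_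
        intro j hj
        have := h j hj
        rw [this]
        congr 1
        ring
    calc P {ω | ∃ l ε : ℤ, (ε = 1 ∨ ε = -1) ∧ |l| ≤ (n : ℤ) ^ 10 ∧ ¬(l = -(n : ℤ) ∧ ε = 1) ∧
            ∀ j : ℕ, j ≤ 2 * n → ξ ω (-(n : ℤ) + j) = ξ ω (l + ε * j)}
        ≤ P (⋃ l ∈ I1, {ω | ∀ j : ℕ, j ≤ 2 * n → ξ ω (-(n : ℤ) + j) = ξ ω (l + j)}) +
          P (⋃ l ∈ I2, {ω | ∀ j : ℕ, j ≤ 2 * n → ξ ω (-(n : ℤ) + j) = ξ ω (l - j)}) :=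
        le_trans (measure_mono hsub) (measure_union_le _ _)
      _ ≤ (∑ l ∈ I1, P {ω | ∀ j : ℕ, j ≤ 2 * n → ξ ω (-(n : ℤ) + j) = ξ ω (l + j)}) +
          (∑ l ∈ I2, P {ω | ∀ j : ℕ, j ≤ 2 * n → ξ ω (-(n : ℤ) + j) = ξ ω (l - j)}) :=
        add_le_add (measure_biUnion_finset_le _ _) (measure_biUnion_finset_le _ _)
      _ ≤ (∑ _l ∈ I1, (1 / 2 : ENNReal) ^ (n + 1)) + (∑ _l ∈ I2, (1 / 2 : ENNReal) ^ n) := by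
        apply add_le_add
        · apply Finset.sum_le_sum
          intro l hl
          exact fwd_bound P ξ hξmeas hξindep hξbern n l (Finset.mem_erase.mp hl).1
        · apply Finset.sum_le_sum
          intro l _
          exact bwd_bound P ξ hξmeas hξindep hξbern n l
      _ = (2 * M : ENNReal) * (1 / 2 : ENNReal) ^ (n + 1) +
          (2 * M + 1 : ENNReal) * (1 / 2 : ENNReal) ^ n := by
        rw [Finset.sum_const, Finset.sum_const, hI1card, hI2card, nsmul_eq_mul, nsmul_eq_mul]
        push_cast
        ring
      _ = ((M : ENNReal) + (2 * M + 1)) * (1 / 2 : ENNReal) ^ n := by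
        rw [pow_succ]
        have h2 : (2 * M : ENNReal) * ((1 / 2 : ENNReal) ^ n * (1 / 2)) =
            (M : ENNReal) * (1 / 2 : ENNReal) ^ n := by
          rw [← mul_assoc]
          rw [show (2 * M : ENNReal) * (1 / 2 : ENNReal) ^ n * (1 / 2) =
            (M : ENNReal) * (1 / 2 : ENNReal) ^ n * (2 * (1 / 2)) by ring]
          rw [show (2 : ENNReal) * (1 / 2) = 1 by
            rw [one_div, ENNReal.mul_inv_cancel (by norm_num) (by norm_num)], mul_one]
        rw [h2]
        ring
      _ ≤ 4 * (n : ENNReal) ^ 10 * (1 / 2 : ENNReal) ^ n := by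
        apply mul_le_mul_left
        have hMcast : ((M : ENNReal)) = (n : ENNReal) ^ 10 := by
          rw [hM]; push_cast; ring
        rw [← hMcast]
        have hM1 : (1 : ENNReal) ≤ (M : ENNReal) := by
          have : 1 ≤ M := Nat.one_le_iff_ne_zero.mpr (by positivity)
          exact_mod_cast this
        calc (M : ENNReal) + (2 * M + 1) ≤ (M : ENNReal) + (2 * M + M) := by
              exact add_le_add_right (add_le_add_right hM1 _) _
          _ = 4 * (M : ENNReal) := by ring
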